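/- For Re a > 1 and Re b > 1, \int_0^1 \zeta(1-a,q) \zeta(1-b,q) dq = \frac{2 \Gamma(a)\Gamma(b)}{(2\pi)^{a+b}} \zeta(a+b) \cos(\frac{\pi}{2}(a-b)). -/

import Mathlib

open HurwitzZeta Complex

section HurwitzAux

open MeasureTheory Real Set


lemma norm_term (s : ℂ) (hs : 0 < s.re) (x : ℝ) (n : ℕ) :
    ‖cexp (2 * π * I * x * n) / (n : ℂ) ^ s‖ = 1 / (n : ℝ) ^ s.re := by
  have hx : (2 * (π:ℂ) * I * x * n) = ((2 * π * x * n : ℝ) : ℂ) * I := by push_cast; ring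
  rcases Nat.eq_zero_or_pos n with h | h
  · have hs0 : s ≠ 0 := fun h0 => by simp [h0] at hs
    simp [h, Complex.zero_cpow hs0, Real.zero_rpow hs.ne']
  · rw [norm_div, hx, Complex.norm_exp_ofReal_mul_I, norm_natCast_cpow_of_pos h]

lemma summable_norm_term (s : ℂ) (hs : 1 < s.re) (x : ℝ) :
    Summable fun n : ℕ => ‖cexp (2 * π * I * x * n) / (n : ℂ) ^ s‖ := by
  simp_rw [norm_term s (by linarith) x]
  exact Real.summable_one_div_nat_rpow.mpr hs

lemma continuous_expZeta_comp (s : ℂ) (hs : 1 < s.re) (σ : ℝ) :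
    Continuous fun q : ℝ => expZeta (↑(σ * q)) s := by
  have h1 : (fun q : ℝ => expZeta (↑(σ * q)) s)
      = fun q => ∑' n : ℕ, cexp (2 * π * I * ((σ * q : ℝ) : ℂ) * n) / (n : ℂ) ^ s :=
    funext fun q => (hasSum_expZeta_of_one_lt_re (σ * q) hs).tsum_eq.symm
  rw [h1]
  refine continuous_tsum (fun n => ?_) (Real.summable_one_div_nat_rpow.mpr hs)
    (fun n q => le_of_eq (norm_term s (by linarith) (σ * q) n))
  fun_prop

lemma norm_one_div_cpow (s : ℂ) (hs : 0 < s.re) (n : ℕ) :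
    ‖1 / (n : ℂ) ^ s‖ = 1 / (n : ℝ) ^ s.re := by
  have := norm_term s hs 0 n
  simpa using this

noncomputable def Fterm (a b : ℂ) (σ τ : ℝ) (p : ℕ × ℕ) (q : ℝ) : ℂ :=
  (cexp (2 * π * I * ((σ * q : ℝ) : ℂ) * p.1) / (p.1 : ℂ) ^ a) *
  (cexp (2 * π * I * ((τ * q : ℝ) : ℂ) * p.2) / (p.2 : ℂ) ^ b)

noncomputable def Cterm (a b : ℂ) (p : ℕ × ℕ) : ℂ := 1 / ((p.1 : ℂ) ^ a * (p.2 : ℂ) ^ b)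

lemma continuous_Fterm (a b : ℂ) (σ τ : ℝ) (p : ℕ × ℕ) : Continuous (Fterm a b σ τ p) := by
  unfold Fterm
  fun_prop

lemma norm_Fterm (a b : ℂ) (ha : 1 < a.re) (hb : 1 < b.re) (σ τ : ℝ) (p : ℕ × ℕ) (q : ℝ) :
    ‖Fterm a b σ τ p q‖ = 1 / (p.1 : ℝ) ^ a.re * (1 / (p.2 : ℝ) ^ b.re) := by
  rw [Fterm, norm_mul, norm_term a (by linarith) _ _, norm_term b (by linarith) _ _]

lemma integral_Fterm (a b : ℂ) (ha : 1 < a.re) (hb : 1 < b.re) (σ τ : ℝ)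
    (hσ : σ = 1 ∨ σ = -1) (hτ : τ = 1 ∨ τ = -1) (p : ℕ × ℕ) :
    (∫ q in Ioc (0:ℝ) 1, Fterm a b σ τ p q)
      = if (σ * p.1 + τ * p.2 : ℝ) = 0 then Cterm a b p else 0 := by
  obtain ⟨n, m⟩ := p
  have hFe : ∀ q : ℝ, Fterm a b σ τ (n, m) q
      = Cterm a b (n, m) * cexp ((2 * π * I * ((σ * n + τ * m : ℝ) : ℂ)) * q) := by
    intro q
    rw [Fterm, Cterm, div_mul_div_comm, ← Complex.exp_add, div_mul_eq_mul_div,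
      ← one_div_mul_eq_div, mul_comm (1 / _), one_div]
    congr 2
    push_cast
    ring
  simp_rw [hFe]
  rw [MeasureTheory.integral_const_mul]
  rw [← intervalIntegral.integral_of_le zero_le_one]
  by_cases hc : (σ * n + τ * m : ℝ) = 0
  · rw [if_pos hc, hc]
    simp
  · rw [if_neg hc]
    have hc' : (2 * (π:ℂ) * I * ((σ * n + τ * m : ℝ) : ℂ)) ≠ 0 :=
      mul_ne_zero (mul_ne_zero (mul_ne_zero two_ne_zero
        (Complex.ofReal_ne_zero.mpr Real.pi_ne_zero)) I_ne_zero)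
        (Complex.ofReal_ne_zero.mpr hc)
    rw [integral_exp_mul_complex hc']
    obtain ⟨z, hz⟩ : ∃ z : ℤ, (σ * n + τ * m : ℝ) = (z : ℝ) := by
      rcases hσ with rfl | rfl <;> rcases hτ with rfl | rfl
      exacts [⟨(n : ℤ) + m, by push_cast; ring⟩, ⟨(n : ℤ) - m, by push_cast; ring⟩,
        ⟨-(n : ℤ) + m, by push_cast; ring⟩, ⟨-(n : ℤ) - m, by push_cast; ring⟩]
    have : (2 * (π:ℂ) * I * ((σ * n + τ * m : ℝ) : ℂ)) * (1:ℝ) = (z : ℂ) * (2 * π * I) := by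
      rw [hz]
      push_cast
      ring
    rw [this, Complex.exp_int_mul_two_pi_mul_I]
    simp

lemma norm_Cterm (a b : ℂ) (ha : 1 < a.re) (hb : 1 < b.re) (p : ℕ × ℕ) :
    ‖Cterm a b p‖ = 1 / (p.1 : ℝ) ^ a.re * (1 / (p.2 : ℝ) ^ b.re) := by
  rw [show Cterm a b p = 1 / (p.1 : ℂ) ^ a * (1 / (p.2 : ℂ) ^ b) by
      rw [Cterm, div_mul_div_comm, one_mul],
    norm_mul, norm_one_div_cpow a (by linarith) _, norm_one_div_cpow b (by linarith) _]

set_option maxHeartbeats 1000000 in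
lemma key_integral (a b : ℂ) (ha : 1 < a.re) (hb : 1 < b.re) (σ τ : ℝ)
    (hσ : σ = 1 ∨ σ = -1) (hτ : τ = 1 ∨ τ = -1) :
    ∫ q in Ioc (0:ℝ) 1, expZeta (↑(σ * q)) a * expZeta (↑(τ * q)) b =
      if σ = τ then 0 else riemannZeta (a + b) := by
  have hσ0 : σ ≠ 0 := by rcases hσ with rfl | rfl <;> norm_num
  have ha0 : a ≠ 0 := fun h => by rw [h] at ha; simp at ha; linarith
  have hab0 : a + b ≠ 0 := fun h => by
    have := congrArg Complex.re h
    simp [Complex.add_re] at this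
    linarith
  have hpt : ∀ q : ℝ, expZeta (↑(σ * q)) a * expZeta (↑(τ * q)) b
      = ∑' p : ℕ × ℕ, Fterm a b σ τ p q := by
    intro q
    rw [← (hasSum_expZeta_of_one_lt_re (σ * q) ha).tsum_eq,
      ← (hasSum_expZeta_of_one_lt_re (τ * q) hb).tsum_eq]
    exact tsum_mul_tsum_of_summable_norm (summable_norm_term a ha (σ * q))
      (summable_norm_term b hb (τ * q))
  have hsumnorm : Summable fun p : ℕ × ℕ => 1 / (p.1 : ℝ) ^ a.re * (1 / (p.2 : ℝ) ^ b.re) :=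
    Summable.mul_of_nonneg (Real.summable_one_div_nat_rpow.mpr ha)
      (Real.summable_one_div_nat_rpow.mpr hb) (fun n => by positivity) (fun n => by positivity)
  have hFsum : Summable fun p : ℕ × ℕ => ∫ q in Ioc (0:ℝ) 1, ‖Fterm a b σ τ p q‖ := by
    simp_rw [norm_Fterm a b ha hb σ τ]
    simpa [Real.volume_Ioc] using hsumnorm
  simp_rw [hpt]
  rw [← integral_tsum_of_summable_integral_norm
    (fun p => (continuous_Fterm a b σ τ p).integrableOn_Ioc) hFsum]
  rw [tsum_congr (integral_Fterm a b ha hb σ τ hσ hτ)]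
  by_cases hστ : σ = τ
  · rw [if_pos hστ]
    subst hστ
    convert tsum_zero with p
    by_cases h : (σ * p.1 + σ * p.2 : ℝ) = 0
    · rw [if_pos h]
      have h2 : (p.1 : ℝ) + (p.2 : ℝ) = 0 := by
        rcases mul_eq_zero.mp (show σ * ((p.1 : ℝ) + p.2) = 0 by linarith) with h' | h'
        · exact absurd h' hσ0
        · exact h'
      have h3 : p.1 + p.2 = 0 := by exact_mod_cast h2
      have hp1 : p.1 = 0 := by omega
      rw [Cterm, hp1]
      simp [Complex.zero_cpow ha0]
    · rw [if_neg h]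
  · rw [if_neg hστ]
    have hτσ : τ = -σ := by
      rcases hσ with rfl | rfl <;> rcases hτ with rfl | rfl
      · exact absurd rfl hστ
      · norm_num
      · norm_num
      · exact absurd rfl hστ
    subst hτσ
    have hcond : ∀ p : ℕ × ℕ, ((σ * p.1 + -σ * p.2 : ℝ) = 0) ↔ p.1 = p.2 := by
      intro p
      constructor
      · intro h
        have h2 : (p.1 : ℝ) = p.2 := by
          rcases mul_eq_zero.mp (show σ * ((p.1 : ℝ) - p.2) = 0 by linarith) with h' | h'
          · exact absurd h' hσ0
          · linarith
        exact_mod_cast h2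
      · intro h
        rw [h]
        ring
    rw [tsum_congr (fun p => if_congr (hcond p) rfl rfl)]
    have hCnorm : ∀ p : ℕ × ℕ, ‖(if p.1 = p.2 then Cterm a b p else 0 : ℂ)‖
        ≤ 1 / (p.1 : ℝ) ^ a.re * (1 / (p.2 : ℝ) ^ b.re) := by
      intro p
      split
      · exact le_of_eq (norm_Cterm a b ha hb p)
      · simp only [norm_zero]
        positivity
    have hgsum : Summable (fun p : ℕ × ℕ => if p.1 = p.2 then Cterm a b p else 0) :=
      Summable.of_norm_bounded hsumnorm hCnorm
    rw [Summable.tsum_prod hgsum]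
    have hinner : ∀ n : ℕ, (∑' m : ℕ, if (n, m).1 = (n, m).2 then Cterm a b (n, m) else 0)
        = 1 / (n : ℂ) ^ (a + b) := by
      intro n
      rw [tsum_eq_single n (fun m hm => if_neg (fun h => hm h.symm)), if_pos rfl]
      rcases Nat.eq_zero_or_pos n with hn | hn
      · subst hn
        simp [Cterm, Complex.zero_cpow ha0, Complex.zero_cpow hab0]
      · rw [Cterm, Complex.cpow_add _ _ (Nat.cast_ne_zero.mpr hn.ne')]
    rw [tsum_congr hinner]
    exact (zeta_eq_tsum_one_div_nat_cpow (by rw [Complex.add_re]; linarith)).symm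

set_option maxHeartbeats 1000000 in
theorem integral_hurwitzZeta_hurwitzZeta (a b : ℂ) (ha : 1 < a.re) (hb : 1 < b.re) :
    (∫ q in (0:ℝ)..1, hurwitzZeta (↑q) (1 - a) * hurwitzZeta (↑q) (1 - b))
      = 2 * Complex.Gamma a * Complex.Gamma b / (2 * Real.pi : ℂ) ^ (a + b)
          * riemannZeta (a + b) * Complex.cos ((Real.pi : ℂ) / 2 * (a - b)) := by
  have hNat : ∀ (s : ℂ), 1 < s.re → (∀ n : ℕ, s ≠ -n) ∧ s ≠ 1 := by
    intro s hs
    constructor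
    · intro n h
      rw [h] at hs
      simp only [Complex.neg_re, Complex.natCast_re] at hs
      linarith [Nat.cast_nonneg (α := ℝ) n]
    · intro h
      rw [h] at hs
      simp at hs
  obtain ⟨haN, ha1⟩ := hNat a ha
  obtain ⟨hbN, hb1⟩ := hNat b hb
  have expand : ∀ q : ℝ, hurwitzZeta (↑q) (1 - a) * hurwitzZeta (↑q) (1 - b)
      = ((2 * π : ℂ) ^ (-a) * Complex.Gamma a * ((2 * π : ℂ) ^ (-b) * Complex.Gamma b)) *
        ( cexp (-π * I * a / 2) * cexp (-π * I * b / 2)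
            * (expZeta (↑((1:ℝ) * q)) a * expZeta (↑((1:ℝ) * q)) b)
        + cexp (-π * I * a / 2) * cexp (π * I * b / 2)
            * (expZeta (↑((1:ℝ) * q)) a * expZeta (↑((-1:ℝ) * q)) b)
        + cexp (π * I * a / 2) * cexp (-π * I * b / 2)
            * (expZeta (↑((-1:ℝ) * q)) a * expZeta (↑((1:ℝ) * q)) b)
        + cexp (π * I * a / 2) * cexp (π * I * b / 2)
            * (expZeta (↑((-1:ℝ) * q)) a * expZeta (↑((-1:ℝ) * q)) b)) := by
    intro q
    rw [hurwitzZeta_one_sub _ haN (Or.inr ha1), hurwitzZeta_one_sub _ hbN (Or.inr hb1)]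
    have hq1 : (((1:ℝ) * q : ℝ) : UnitAddCircle) = ((q : ℝ) : UnitAddCircle) := by norm_num
    have hqn : (((-1:ℝ) * q : ℝ) : UnitAddCircle) = -((q : ℝ) : UnitAddCircle) := by
      rw [neg_one_mul]
      exact AddCircle.coe_neg (p := (1:ℝ))
    rw [hq1, hqn]
    ring
  have hg : ∀ σ τ : ℝ, IntegrableOn
      (fun q : ℝ => expZeta (↑(σ * q)) a * expZeta (↑(τ * q)) b) (Ioc (0:ℝ) 1) :=
    fun σ τ => ((continuous_expZeta_comp a ha σ).mul
      (continuous_expZeta_comp b hb τ)).integrableOn_Ioc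
  rw [intervalIntegral.integral_of_le zero_le_one]
  simp_rw [expand]
  rw [MeasureTheory.integral_const_mul]
  have A11 : Integrable (fun q : ℝ => cexp (-↑π * I * a / 2) * cexp (-↑π * I * b / 2)
      * (expZeta (↑((1:ℝ) * q)) a * expZeta (↑((1:ℝ) * q)) b))
      (volume.restrict (Ioc (0:ℝ) 1)) := (hg 1 1).const_mul _
  have A12 : Integrable (fun q : ℝ => cexp (-↑π * I * a / 2) * cexp (↑π * I * b / 2)
      * (expZeta (↑((1:ℝ) * q)) a * expZeta (↑((-1:ℝ) * q)) b))
      (volume.restrict (Ioc (0:ℝ) 1)) := (hg 1 (-1)).const_mul _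
  have A21 : Integrable (fun q : ℝ => cexp (↑π * I * a / 2) * cexp (-↑π * I * b / 2)
      * (expZeta (↑((-1:ℝ) * q)) a * expZeta (↑((1:ℝ) * q)) b))
      (volume.restrict (Ioc (0:ℝ) 1)) := (hg (-1) 1).const_mul _
  have A22 : Integrable (fun q : ℝ => cexp (↑π * I * a / 2) * cexp (↑π * I * b / 2)
      * (expZeta (↑((-1:ℝ) * q)) a * expZeta (↑((-1:ℝ) * q)) b))
      (volume.restrict (Ioc (0:ℝ) 1)) := (hg (-1) (-1)).const_mul _
  have B2 : Integrable (fun q : ℝ => cexp (-↑π * I * a / 2) * cexp (-↑π * I * b / 2)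
      * (expZeta (↑((1:ℝ) * q)) a * expZeta (↑((1:ℝ) * q)) b)
      + cexp (-↑π * I * a / 2) * cexp (↑π * I * b / 2)
      * (expZeta (↑((1:ℝ) * q)) a * expZeta (↑((-1:ℝ) * q)) b))
      (volume.restrict (Ioc (0:ℝ) 1)) := A11.add A12
  have B3 : Integrable (fun q : ℝ => cexp (-↑π * I * a / 2) * cexp (-↑π * I * b / 2)
      * (expZeta (↑((1:ℝ) * q)) a * expZeta (↑((1:ℝ) * q)) b)
      + cexp (-↑π * I * a / 2) * cexp (↑π * I * b / 2)
      * (expZeta (↑((1:ℝ) * q)) a * expZeta (↑((-1:ℝ) * q)) b)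
      + cexp (↑π * I * a / 2) * cexp (-↑π * I * b / 2)
      * (expZeta (↑((-1:ℝ) * q)) a * expZeta (↑((1:ℝ) * q)) b))
      (volume.restrict (Ioc (0:ℝ) 1)) := B2.add A21
  rw [MeasureTheory.integral_add B3 A22, MeasureTheory.integral_add B2 A21,
    MeasureTheory.integral_add A11 A12]
  rw [MeasureTheory.integral_const_mul, MeasureTheory.integral_const_mul,
    MeasureTheory.integral_const_mul, MeasureTheory.integral_const_mul]
  rw [key_integral a b ha hb 1 1 (Or.inl rfl) (Or.inl rfl),
    key_integral a b ha hb 1 (-1) (Or.inl rfl) (Or.inr rfl),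
    key_integral a b ha hb (-1) 1 (Or.inr rfl) (Or.inl rfl),
    key_integral a b ha hb (-1) (-1) (Or.inr rfl) (Or.inr rfl)]
  rw [if_pos rfl, if_pos rfl, if_neg (by norm_num : (1:ℝ) ≠ -1),
    if_neg (by norm_num : (-1:ℝ) ≠ 1)]
  have hpi : (2 * (π:ℂ)) ≠ 0 := by
    simp [Real.pi_ne_zero]
  have h12 : cexp (-↑π * I * a / 2) * cexp (↑π * I * b / 2)
      = cexp (-(↑π / 2 * (a - b) * I)) := by
    rw [← Complex.exp_add]
    congr 1
    ring
  have h21 : cexp (↑π * I * a / 2) * cexp (-↑π * I * b / 2)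
      = cexp (↑π / 2 * (a - b) * I) := by
    rw [← Complex.exp_add]
    congr 1
    ring
  rw [h12, h21, Complex.cos, Complex.cpow_neg, Complex.cpow_neg,
    Complex.cpow_add _ _ hpi]
  have hpa : (2 * (π:ℂ)) ^ a ≠ 0 := by
    simp [Complex.cpow_eq_zero_iff, hpi]
  have hpb : (2 * (π:ℂ)) ^ b ≠ 0 := by
    simp [Complex.cpow_eq_zero_iff, hpi]
  field_simp
  ring

end HurwitzAux
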